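/- Let 𝓘 and 𝓐 be finite index sets. Let g_M{}^N{}_P{}^Q be a real tensor, set f_M{}^N{}_P{}^Q = g_M{}^N{}_P{}^Q − 2 δ_M^N δ_P^Q, and define h_{(M,a)}{}^{(N,b)}{}_{(P,c)}{}^{(Q,d)} = g_M{}^N{}_P{}^Q δ^a_b δ^c_d − δ_M^N δ_P^Q δ^a_b δ^c_d + δ_M^N δ_P^Q δ^c_b δ^a_d for a, b, c, d ∈ 𝓐. Define families of tensors recursively: f_1(M; N) = δ_M^N, and for p ≥ 2, f_p(M1⋯Mp; N1⋯Np) = Σ_{1≤i<j≤p} (−1)^{i+p} Σ_P f_{Mi}{}^{N1}{}_{Mj}{}^P · f_{p−1}(M1⋯M(i−1) M(i+1)⋯M(j−1) P M(j+1)⋯Mp; N2⋯Np) − Σ_P f_{Mp}{}^{N1}{}_{M(p−1)}{}^P · f_{p−1}(M1⋯M(p−2) P; N2⋯Np); similarly h_1((M,a); (N,b)) = δ_M^N δ^a_b, and for p ≥ 2, h_p is defined by the same recursion over the doubled index set 𝓘 × 𝓐 using h in place of f (with the contracted index a pair (P,e) ∈ 𝓘 × 𝓐), except that the prefactor (−1)^{i+p}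 in the double sum is replaced by +1 (the final term keeps coefficient −1). Then for every p ≥ 1, antisymmetrizing h_p over its 𝓐-indices a1, …, ap (attached to M1, …, Mp) gives h_p(M1 a1 ⋯ Mp ap; N1 b1 ⋯ Np bp)^{[a1⋯ap]} = (−1)^{p(p−1)/2} δ^{[a1⋯ap]}_{b1⋯bp} · f_p(M1⋯Mp; N1⋯Np), where X^{[a1⋯ap]} = (1/p!) Σ_{σ ∈ S_p} sgn(σ) X^{aσ(1)⋯aσ(p)} and δ^{[a1⋯ap]}_{b1⋯bp} = (1/p!) Σ_{σ ∈ S_p} sgn(σ) δ^{aσ(1)}_{b1} ⋯ δ^{aσ(p)}_{bp}. -/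

import Mathlib

section AuxStatement14
open Equiv Finset

/-- The recursively defined family of tensors (eq. (3.31)): `recTensor f4 sign 1` is the
Kronecker delta, and
`recTensor f4 sign p (M1⋯Mp) (N1⋯Np) = Σ_{i<j} sign(i, p) Σ_P f4(Mi, N1, Mj, P) ·
recTensor f4 sign (p−1) (M1⋯M(i−1)M(i+1)⋯M(j−1)PM(j+1)⋯Mp) (N2⋯Np)
− Σ_P f4(Mp, N1, M(p−1), P) · recTensor f4 sign (p−1) (M1⋯M(p−2)P) (N2⋯Np)`,
where in each term of the double sum the `i`-th lower index is removed and the `j`-th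
lower index is replaced by the contracted index `P`. Here `sign i p` receives the
`0`-based Lean index `i`. -/
def recTensor {κ : Type} [Fintype κ] [DecidableEq κ]
    (f4 : κ → κ → κ → κ → ℝ) (sign : ℕ → ℕ → ℝ) :
    (p : ℕ) → (Fin p → κ) → (Fin p → κ) → ℝ
  | 0, _, _ => 1
  | 1, M, N => if M 0 = N 0 then 1 else 0
  | (k + 2), M, N =>
      (∑ i : Fin (k + 2), ∑ j : Fin (k + 2),
        if i < j then
          sign (i : ℕ) (k + 2) *
            ∑ Pq : κ, f4 (M i) (N 0) (M j) Pq *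
              recTensor f4 sign (k + 1)
                (Function.update (fun t : Fin (k + 1) => M (i.succAbove t))
                  ⟨(j : ℕ) - 1, by have := j.isLt; omega⟩ Pq)
                (Fin.tail N)
        else 0)
      - ∑ Pq : κ, f4 (M (Fin.last (k + 1))) (N 0) (M ⟨k, by omega⟩) Pq *
          recTensor f4 sign (k + 1)
            (Fin.snoc (fun t : Fin k => M ⟨(t : ℕ), by have := t.isLt; omega⟩) Pq)
            (Fin.tail N)


lemma perm_sum_decompose (m : ℕ) (f : Equiv.Perm (Fin (m+1)) → ℝ) :
    ∑ τ : Equiv.Perm (Fin (m+1)), f τ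
      = ∑ q : Fin (m+1), ∑ σ' : Equiv.Perm (Fin m), f (Equiv.Perm.decomposeFin.symm (q, σ')) := by
  rw [← Equiv.sum_comp Equiv.Perm.decomposeFin.symm f, Fintype.sum_prod_type]


lemma lemC {A : Type} (m : ℕ) (i i0 : Fin (m+1))
    (a : Fin (m+1) → A) (Ψ : (Fin m → A) → ℝ) :
    ∑ σ : Equiv.Perm (Fin (m+1)), ((Equiv.Perm.sign σ : ℤ) : ℝ) *
      (if σ i = i0 then Ψ (fun t => a (σ (i.succAbove t))) else 0)
    = (-1 : ℝ)^((i:ℕ)+(i0:ℕ)) * ∑ σ' : Equiv.Perm (Fin m), ((Equiv.Perm.sign σ' : ℤ) : ℝ) *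
        Ψ (fun t => a (i0.succAbove (σ' t))) := by
  rw [← Equiv.sum_comp ((Equiv.mulRight (i.cycleRange)).trans
        (Equiv.mulLeft (i0.cycleRange)⁻¹))
      (fun σ => ((Equiv.Perm.sign σ : ℤ) : ℝ) *
        (if σ i = i0 then Ψ (fun t => a (σ (i.succAbove t))) else 0))]
  simp only [Equiv.trans_apply, Equiv.coe_mulRight, Equiv.coe_mulLeft]
  rw [perm_sum_decompose m]
  have key : ∀ (q : Fin (m+1)) (σ' : Equiv.Perm (Fin m)),
      ((Equiv.Perm.sign ((i0.cycleRange)⁻¹ * ((Equiv.Perm.decomposeFin.symm (q, σ')) * i.cycleRange)) : ℤ) : ℝ) *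
        (if ((i0.cycleRange)⁻¹ * ((Equiv.Perm.decomposeFin.symm (q, σ')) * i.cycleRange)) i = i0 then
          Ψ (fun t => a (((i0.cycleRange)⁻¹ * ((Equiv.Perm.decomposeFin.symm (q, σ')) * i.cycleRange)) (i.succAbove t))) else 0)
      = if q = 0 then
          (-1 : ℝ)^((i:ℕ)+(i0:ℕ)) * (((Equiv.Perm.sign σ' : ℤ) : ℝ) *
            Ψ (fun t => a (i0.succAbove (σ' t)))) else 0 := by
    intro q σ'
    by_cases hq : q = 0
    · subst hq
      have hcond : ((i0.cycleRange)⁻¹ * ((Equiv.Perm.decomposeFin.symm ((0 : Fin (m+1)), σ')) * i.cycleRange)) i = i0 := by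
        simp only [Equiv.Perm.mul_apply, Fin.cycleRange_self,
          Equiv.Perm.decomposeFin_symm_apply_zero, Equiv.Perm.inv_def]
        rw [Equiv.symm_apply_eq, Fin.cycleRange_self]
      rw [if_pos hcond, if_pos rfl]
      have harg : ∀ t : Fin m,
          ((i0.cycleRange)⁻¹ * ((Equiv.Perm.decomposeFin.symm ((0 : Fin (m+1)), σ')) * i.cycleRange)) (i.succAbove t)
            = i0.succAbove (σ' t) := by
        intro t
        simp only [Equiv.Perm.mul_apply, Fin.cycleRange_succAbove,
          Equiv.Perm.decomposeFin_symm_apply_succ, Equiv.swap_self, Equiv.refl_apply,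
          Equiv.Perm.inv_def]
        rw [Equiv.symm_apply_eq, Fin.cycleRange_succAbove]
      have hsign : ((Equiv.Perm.sign ((i0.cycleRange)⁻¹ * ((Equiv.Perm.decomposeFin.symm ((0 : Fin (m+1)), σ')) * i.cycleRange)) : ℤ) : ℝ)
          = (-1 : ℝ)^((i:ℕ)+(i0:ℕ)) * ((Equiv.Perm.sign σ' : ℤ) : ℝ) := by
        rw [map_mul, map_mul, Equiv.Perm.sign_inv, Fin.sign_cycleRange, Fin.sign_cycleRange,
          Equiv.Perm.decomposeFin.symm_sign, if_pos rfl, one_mul]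
        push_cast
        ring
      rw [hsign]
      have : (fun t => a (((i0.cycleRange)⁻¹ * ((Equiv.Perm.decomposeFin.symm ((0 : Fin (m+1)), σ')) * i.cycleRange)) (i.succAbove t)))
          = fun t => a (i0.succAbove (σ' t)) := funext fun t => congrArg a (harg t)
      rw [this]; ring
    · rw [if_neg hq]
      have hcond : ¬ ((i0.cycleRange)⁻¹ * ((Equiv.Perm.decomposeFin.symm (q, σ')) * i.cycleRange)) i = i0 := by
        simp only [Equiv.Perm.mul_apply, Fin.cycleRange_self,
          Equiv.Perm.decomposeFin_symm_apply_zero, Equiv.Perm.inv_def]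
        rw [Equiv.symm_apply_eq, Fin.cycleRange_self]
        exact hq
      rw [if_neg hcond, mul_zero]
  rw [Finset.sum_congr rfl fun q _ => Finset.sum_congr rfl fun σ' _ => by
    convert key q σ' using 3; congr 1]
  have hsw : ∀ x : Fin (m+1),
      (∑ σ' : Equiv.Perm (Fin m), if x = 0 then
        (-1 : ℝ)^((i:ℕ)+(i0:ℕ)) * (((Equiv.Perm.sign σ' : ℤ) : ℝ) *
          Ψ (fun t => a (i0.succAbove (σ' t)))) else 0)
      = if x = 0 then (-1 : ℝ)^((i:ℕ)+(i0:ℕ)) *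
          ∑ σ' : Equiv.Perm (Fin m), ((Equiv.Perm.sign σ' : ℤ) : ℝ) *
            Ψ (fun t => a (i0.succAbove (σ' t))) else 0 := by
    intro x; split_ifs <;> simp [Finset.mul_sum]
  simp only [hsw]
  rw [Finset.sum_ite_eq' Finset.univ (0 : Fin (m+1))]
  simp

lemma cycleRange_inv_apply {n : ℕ} (c : Equiv.Perm (Fin n)) (x y : Fin n) (h : c y = x) :
    c⁻¹ x = y := by rw [← h]; simp

lemma upd_pointwise (m : ℕ) (i j : Fin (m+2)) (hij : i < j) (t : Fin (m+1)) :
    Function.update i.succAbove (⟨(j:ℕ)-1, by have := j.isLt; omega⟩ : Fin (m+1)) i t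
    = j.succAbove
        ((((⟨(i:ℕ), by have h1 := j.isLt; have h2 : (i:ℕ) < (j:ℕ) := hij; omega⟩ :
            Fin (m+1)).cycleRange)⁻¹)
          ((⟨(j:ℕ)-1, by have := j.isLt; omega⟩ : Fin (m+1)).cycleRange t)) := by
  have hij' : (i:ℕ) < (j:ℕ) := hij
  have hjlt := j.isLt
  have htlt := t.isLt
  rcases lt_or_ge (t:ℕ) (i:ℕ) with h1 | h1
  · -- t < i : both sides castSucc t
    have htne : t ≠ (⟨(j:ℕ)-1, by omega⟩ : Fin (m+1)) := by
      intro h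
      have : (t:ℕ) = (j:ℕ)-1 := by rw [h]
      omega
    rw [Function.update_of_ne htne]
    have hA : (⟨(j:ℕ)-1, by omega⟩ : Fin (m+1)).cycleRange t = ⟨(t:ℕ)+1, by omega⟩ := by
      have hlt : t < (⟨(j:ℕ)-1, by omega⟩ : Fin (m+1)) := by simp only [Fin.lt_def, Fin.mk_lt_mk]; omega
      apply Fin.ext
      rw [Fin.coe_cycleRange_of_lt hlt]
    rw [hA]; clear hA
    have hB : ((⟨(i:ℕ), by omega⟩ : Fin (m+1)).cycleRange)⁻¹ (⟨(t:ℕ)+1, by omega⟩ : Fin (m+1)) = t := by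
      apply cycleRange_inv_apply
      have hlt : t < (⟨(i:ℕ), by omega⟩ : Fin (m+1)) := by simp only [Fin.lt_def, Fin.mk_lt_mk]; omega
      apply Fin.ext
      rw [Fin.coe_cycleRange_of_lt hlt]
    rw [hB]; clear hB
    rw [Fin.succAbove_of_castSucc_lt i t (by simp only [Fin.lt_def, Fin.coe_castSucc]; omega),
        Fin.succAbove_of_castSucc_lt j t (by simp only [Fin.lt_def, Fin.coe_castSucc]; omega)]
  · rcases eq_or_ne t (⟨(j:ℕ)-1, by omega⟩ : Fin (m+1)) with h2 | h2
    · -- t = jm : LHS = i, RHS = castSucc i' = i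
      rw [h2, Function.update_self]
      rw [Fin.cycleRange_self,
        cycleRange_inv_apply _ _ _ (Fin.cycleRange_self (⟨(i:ℕ), by omega⟩ : Fin (m+1)))]
      rw [Fin.succAbove_of_castSucc_lt j (⟨(i:ℕ), by omega⟩ : Fin (m+1))
        (by simp only [Fin.lt_def, Fin.coe_castSucc]; omega)]
      apply Fin.ext; simp
    · have h2' : (t:ℕ) ≠ (j:ℕ)-1 := fun h => h2 (Fin.ext h)
      rcases lt_or_ge (t:ℕ) ((j:ℕ)-1) with h3 | h3
      · -- i ≤ t < j-1 : both sides succ t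
        rw [Function.update_of_ne h2]
        have hA : (⟨(j:ℕ)-1, by omega⟩ : Fin (m+1)).cycleRange t = ⟨(t:ℕ)+1, by omega⟩ := by
          have hlt : t < (⟨(j:ℕ)-1, by omega⟩ : Fin (m+1)) := by simp only [Fin.lt_def]; omega
          apply Fin.ext
          rw [Fin.coe_cycleRange_of_lt hlt]
        rw [hA]; clear hA
        have hB : ((⟨(i:ℕ), by omega⟩ : Fin (m+1)).cycleRange)⁻¹ (⟨(t:ℕ)+1, by omega⟩ : Fin (m+1))
            = ⟨(t:ℕ)+1, by omega⟩ := by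
          apply cycleRange_inv_apply
          exact Fin.cycleRange_of_gt (by simp only [Fin.lt_def, Fin.mk_lt_mk]; omega)
        rw [hB]; clear hB
        rw [Fin.succAbove_of_le_castSucc i t (by simp only [Fin.le_def, Fin.coe_castSucc]; omega),
            Fin.succAbove_of_castSucc_lt j (⟨(t:ℕ)+1, by omega⟩ : Fin (m+1))
              (by simp only [Fin.lt_def, Fin.coe_castSucc]; omega)]
        apply Fin.ext; simp
      · -- t ≥ j : both sides succ t
        rw [Function.update_of_ne h2]
        have hA : (⟨(j:ℕ)-1, by omega⟩ : Fin (m+1)).cycleRange t = t :=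
          Fin.cycleRange_of_gt (by simp only [Fin.lt_def, Fin.mk_lt_mk]; omega)
        rw [hA]; clear hA
        have hB : ((⟨(i:ℕ), by omega⟩ : Fin (m+1)).cycleRange)⁻¹ t = t := by
          apply cycleRange_inv_apply
          exact Fin.cycleRange_of_gt (by simp only [Fin.lt_def, Fin.mk_lt_mk]; omega)
        rw [hB]; clear hB
        rw [Fin.succAbove_of_le_castSucc i t (by simp only [Fin.le_def, Fin.coe_castSucc]; omega),
            Fin.succAbove_of_le_castSucc j t (by simp only [Fin.le_def, Fin.coe_castSucc]; omega)]
lemma lemC' {A : Type} (m : ℕ) (i j i0 : Fin (m+2)) (hij : i < j)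
    (a : Fin (m+2) → A) (Ψ : (Fin (m+1) → A) → ℝ) :
    ∑ σ : Equiv.Perm (Fin (m+2)), ((Equiv.Perm.sign σ : ℤ) : ℝ) *
      (if σ j = i0 then
        Ψ (fun t => a (σ (Function.update i.succAbove
            (⟨(j:ℕ)-1, by have := j.isLt; omega⟩ : Fin (m+1)) i t))) else 0)
    = (-1 : ℝ)^((i:ℕ)+(i0:ℕ)+1) * ∑ σ' : Equiv.Perm (Fin (m+1)), ((Equiv.Perm.sign σ' : ℤ) : ℝ) *
        Ψ (fun t => a (i0.succAbove (σ' t))) := by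
  have hij' : (i:ℕ) < (j:ℕ) := hij
  have hjlt := j.isLt
  set π : Equiv.Perm (Fin (m+1)) :=
    ((⟨(i:ℕ), by omega⟩ : Fin (m+1)).cycleRange)⁻¹ *
      ((⟨(j:ℕ)-1, by omega⟩ : Fin (m+1)).cycleRange) with hπ
  have hupd : ∀ (σ : Equiv.Perm (Fin (m+2))) (t : Fin (m+1)),
      σ (Function.update i.succAbove (⟨(j:ℕ)-1, by omega⟩ : Fin (m+1)) i t)
        = σ (j.succAbove (π t)) := by
    intro σ t
    rw [upd_pointwise m i j hij t]
    rfl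
  have step1 : (∑ σ : Equiv.Perm (Fin (m+2)), ((Equiv.Perm.sign σ : ℤ) : ℝ) *
      (if σ j = i0 then
        Ψ (fun t => a (σ (Function.update i.succAbove
            (⟨(j:ℕ)-1, by have := j.isLt; omega⟩ : Fin (m+1)) i t))) else 0))
      = ∑ σ : Equiv.Perm (Fin (m+2)), ((Equiv.Perm.sign σ : ℤ) : ℝ) *
      (if σ j = i0 then
        (fun c : Fin (m+1) → A => Ψ (fun t => c (π t))) (fun t => a (σ (j.succAbove t))) else 0) := by
    apply Finset.sum_congr rfl
    intro σ _
    congr 1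
    split_ifs with h
    · congr 1
      funext t
      exact congrArg a (hupd σ t)
    · rfl
  rw [step1, lemC (m+1) j i0 a (fun c : Fin (m+1) → A => Ψ (fun t => c (π t)))]
  -- now reindex σ' ↦ σ' * π⁻¹
  have step2 : (∑ σ' : Equiv.Perm (Fin (m+1)), ((Equiv.Perm.sign σ' : ℤ) : ℝ) *
      (fun c : Fin (m+1) → A => Ψ (fun t => c (π t))) (fun t => a (i0.succAbove (σ' t))))
      = ((Equiv.Perm.sign π : ℤ) : ℝ) * ∑ ρ : Equiv.Perm (Fin (m+1)),
          ((Equiv.Perm.sign ρ : ℤ) : ℝ) * Ψ (fun t => a (i0.succAbove (ρ t))) := by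
    rw [← Equiv.sum_comp (Equiv.mulRight π⁻¹)
      (fun σ' => ((Equiv.Perm.sign σ' : ℤ) : ℝ) *
        (fun c : Fin (m+1) → A => Ψ (fun t => c (π t))) (fun t => a (i0.succAbove (σ' t))))]
    rw [Finset.mul_sum]
    apply Finset.sum_congr rfl
    intro ρ _
    simp only [Equiv.coe_mulRight]
    have hs : ((Equiv.Perm.sign (ρ * π⁻¹) : ℤ) : ℝ)
        = ((Equiv.Perm.sign ρ : ℤ) : ℝ) * ((Equiv.Perm.sign π : ℤ) : ℝ) := by
      rw [map_mul, Equiv.Perm.sign_inv]; push_cast; ring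
    rw [hs]
    have harg : (fun t => a (i0.succAbove ((ρ * π⁻¹) (π t)))) = fun t => a (i0.succAbove (ρ t)) := by
      funext t
      simp [Equiv.Perm.mul_apply]
    simp only [harg]
    ring
  rw [step2]
  have hsgnπ : ((Equiv.Perm.sign π : ℤ) : ℝ) = (-1 : ℝ)^((i:ℕ)) * (-1 : ℝ)^((j:ℕ)-1) := by
    rw [hπ, map_mul, Equiv.Perm.sign_inv, Fin.sign_cycleRange, Fin.sign_cycleRange]
    push_cast; ring
  rw [hsgnπ]
  rw [← mul_assoc, ← mul_assoc]
  congr 1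
  have hj1 : (j:ℕ) = ((j:ℕ)-1)+1 := by omega
  rw [hj1]
  simp only [Nat.add_sub_cancel]
  rw [show ((j:ℕ)-1)+1+(i0:ℕ) = ((j:ℕ)-1)+((i0:ℕ)+1) by ring,
      show (i:ℕ)+(i0:ℕ)+1 = (i:ℕ)+((i0:ℕ)+1) by ring]
  rw [pow_add, pow_add]
  ring_nf
  rw [pow_mul]
  norm_num
  rcases Nat.even_or_odd ((j:ℕ)-1) with h | h
  · exact Or.inl (Even.neg_one_pow h)
  · exact Or.inr (Odd.neg_one_pow h)

/-- Kronecker contraction. -/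
lemma sum_delta_mul {A : Type} [Fintype A] [DecidableEq A] (x : A) (R : A → ℝ) :
    ∑ e : A, (if x = e then (1:ℝ) else 0) * R e = R x := by
  have : ∀ e : A, (if x = e then (1:ℝ) else 0) * R e = if x = e then R e else 0 := by
    intro e; split_ifs <;> simp
  simp only [this]
  rw [Finset.sum_ite_eq Finset.univ x R]
  simp

/-- Insert a resolution of identity and reindex (condition at `σ i`). -/
lemma delta_insert {A : Type} [DecidableEq A] (m : ℕ) (i : Fin (m+1)) (a : Fin (m+1) → A) (v : A)
    (Ψ : (Fin m → A) → ℝ) :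
    ∑ σ : Equiv.Perm (Fin (m+1)), ((Equiv.Perm.sign σ : ℤ) : ℝ) *
      ((if a (σ i) = v then (1:ℝ) else 0) * Ψ (fun t => a (σ (i.succAbove t))))
    = ∑ i0 : Fin (m+1), (if a i0 = v then (1:ℝ) else 0) *
        ((-1 : ℝ)^((i:ℕ)+(i0:ℕ)) * ∑ σ' : Equiv.Perm (Fin m), ((Equiv.Perm.sign σ' : ℤ) : ℝ) *
          Ψ (fun t => a (i0.succAbove (σ' t)))) := by
  have h1 : ∀ σ : Equiv.Perm (Fin (m+1)),
      ((Equiv.Perm.sign σ : ℤ) : ℝ) *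
        ((if a (σ i) = v then (1:ℝ) else 0) * Ψ (fun t => a (σ (i.succAbove t))))
      = ∑ i0 : Fin (m+1), (if a i0 = v then (1:ℝ) else 0) *
          (((Equiv.Perm.sign σ : ℤ) : ℝ) *
            (if σ i = i0 then Ψ (fun t => a (σ (i.succAbove t))) else 0)) := by
    intro σ
    rw [Finset.sum_eq_single (σ i)]
    · rw [if_pos rfl]; ring
    · intro i0 _ hne
      rw [if_neg (fun h : σ i = i0 => hne h.symm)]
      ring
    · intro h; exact absurd (Finset.mem_univ _) h
  simp only [h1]
  rw [Finset.sum_comm]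
  apply Finset.sum_congr rfl
  intro i0 _
  rw [← Finset.mul_sum, lemC m i i0 a Ψ]

/-- Same with the modified embedding (condition at `σ j`). -/
lemma delta_insert' {A : Type} [DecidableEq A] (m : ℕ) (i j : Fin (m+2)) (hij : i < j)
    (a : Fin (m+2) → A) (v : A) (Ψ : (Fin (m+1) → A) → ℝ) :
    ∑ σ : Equiv.Perm (Fin (m+2)), ((Equiv.Perm.sign σ : ℤ) : ℝ) *
      ((if a (σ j) = v then (1:ℝ) else 0) *
        Ψ (fun t => a (σ (Function.update i.succAbove
            (⟨(j:ℕ)-1, by have := j.isLt; omega⟩ : Fin (m+1)) i t))))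
    = ∑ i0 : Fin (m+2), (if a i0 = v then (1:ℝ) else 0) *
        ((-1 : ℝ)^((i:ℕ)+(i0:ℕ)+1) *
          ∑ σ' : Equiv.Perm (Fin (m+1)), ((Equiv.Perm.sign σ' : ℤ) : ℝ) *
            Ψ (fun t => a (i0.succAbove (σ' t)))) := by
  have h1 : ∀ σ : Equiv.Perm (Fin (m+2)),
      ((Equiv.Perm.sign σ : ℤ) : ℝ) *
        ((if a (σ j) = v then (1:ℝ) else 0) *
          Ψ (fun t => a (σ (Function.update i.succAbove
              (⟨(j:ℕ)-1, by have := j.isLt; omega⟩ : Fin (m+1)) i t))))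
      = ∑ i0 : Fin (m+2), (if a i0 = v then (1:ℝ) else 0) *
          (((Equiv.Perm.sign σ : ℤ) : ℝ) *
            (if σ j = i0 then
              Ψ (fun t => a (σ (Function.update i.succAbove
                (⟨(j:ℕ)-1, by have := j.isLt; omega⟩ : Fin (m+1)) i t))) else 0)) := by
    intro σ
    rw [Finset.sum_eq_single (σ j)]
    · rw [if_pos rfl]; ring
    · intro i0 _ hne
      rw [if_neg (fun h : σ j = i0 => hne h.symm)]
      ring
    · intro h; exact absurd (Finset.mem_univ _) h
  simp only [h1]
  rw [Finset.sum_comm]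
  apply Finset.sum_congr rfl
  intro i0 _
  rw [← Finset.mul_sum, lemC' m i j i0 hij a Ψ]

/-- Componentwise update of a pair-valued tuple. -/
lemma pair_update {X Y : Type} (m : ℕ) (f : Fin m → X) (g : Fin m → Y) (x : Fin m)
    (p : X) (q : Y) :
    Function.update (fun t => (f t, g t)) x (p, q)
      = fun t => (Function.update f x p t, Function.update g x q t) := by
  funext t
  by_cases h : t = x
  · subst h; simp
  · simp [Function.update_of_ne h]

/-- Componentwise snoc of a pair-valued tuple. -/
lemma pair_snoc {X Y : Type} (m : ℕ) (f : Fin m → X) (g : Fin m → Y) (p : X) (q : Y) :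
    (Fin.snoc (fun t => (f t, g t)) (p, q) : Fin (m+1) → X × Y)
      = fun t => ((Fin.snoc f p : Fin (m+1) → X) t, (Fin.snoc g q : Fin (m+1) → Y) t) := by
  funext t
  induction t using Fin.lastCases with
  | last => simp
  | cast s => simp

/-- The antisymmetrized product of Kronecker deltas (without the `1/p!`). -/
noncomputable def Dl {A : Type} [DecidableEq A] (p : ℕ) (a b : Fin p → A) : ℝ :=
  ∑ σ : Equiv.Perm (Fin p), ((Equiv.Perm.sign σ : ℤ) : ℝ) *
    ∏ t : Fin p, (if a (σ t) = b t then (1:ℝ) else 0)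

lemma Dl_rec {A : Type} [DecidableEq A] (m : ℕ) (a b : Fin (m+1) → A) :
    Dl (m+1) a b = ∑ i0 : Fin (m+1), (if a i0 = b 0 then (1:ℝ) else 0) *
      ((-1 : ℝ)^((i0:ℕ)) * Dl m (fun t => a (i0.succAbove t)) (fun t => b t.succ)) := by
  have h1 : Dl (m+1) a b
      = ∑ σ : Equiv.Perm (Fin (m+1)), ((Equiv.Perm.sign σ : ℤ) : ℝ) *
          ((if a (σ 0) = b 0 then (1:ℝ) else 0) *
            ((fun c : Fin m → A => ∏ t : Fin m, (if c t = b t.succ then (1:ℝ) else 0))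
              (fun t => a (σ ((0 : Fin (m+1)).succAbove t))))) := by
    apply Finset.sum_congr rfl
    intro σ _
    congr 1
    rw [Fin.prod_univ_succ]
    congr 1
  rw [h1, delta_insert m 0 a (b 0)
    (fun c : Fin m → A => ∏ t : Fin m, (if c t = b t.succ then (1:ℝ) else 0))]
  apply Finset.sum_congr rfl
  intro i0 _
  norm_num [Dl]

lemma Tij {ι : Type} [Fintype ι] [DecidableEq ι] {A : Type} [Fintype A] [DecidableEq A]
    (g f4 : ι → ι → ι → ι → ℝ)
    (hf4 : ∀ M N P Q : ι, f4 M N P Q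
      = g M N P Q - 2 * (if M = N then (1 : ℝ) else 0) * (if P = Q then (1 : ℝ) else 0))
    (h4 : (ι × A) → (ι × A) → (ι × A) → (ι × A) → ℝ)
    (hh4 : ∀ (M N P Q : ι) (a b c d : A), h4 (M, a) (N, b) (P, c) (Q, d)
      = g M N P Q * (if a = b then (1 : ℝ) else 0) * (if c = d then (1 : ℝ) else 0)
        - (if M = N then (1 : ℝ) else 0) * (if P = Q then (1 : ℝ) else 0) *
            (if a = b then (1 : ℝ) else 0) * (if c = d then (1 : ℝ) else 0)
        + (if M = N then (1 : ℝ) else 0) * (if P = Q then (1 : ℝ) else 0) *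
            (if c = b then (1 : ℝ) else 0) * (if a = d then (1 : ℝ) else 0))
    (k : ℕ)
    (ih : ∀ (M N : Fin (k+1) → ι) (a b : Fin (k+1) → A),
      ∑ σ : Equiv.Perm (Fin (k+1)), ((Equiv.Perm.sign σ : ℤ) : ℝ) *
        recTensor h4 (fun _ _ => 1) (k+1) (fun t => (M t, a (σ t))) (fun t => (N t, b t))
      = (-1 : ℝ)^((k+1)*k/2) * Dl (k+1) a b *
          recTensor f4 (fun i p' => (-1 : ℝ)^(i+1+p')) (k+1) M N)
    (M N : Fin (k+2) → ι) (a b : Fin (k+2) → A) (i j : Fin (k+2)) (hij : i < j) :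
    ∑ σ : Equiv.Perm (Fin (k+2)), ((Equiv.Perm.sign σ : ℤ) : ℝ) *
      ∑ Pq : ι × A, h4 (M i, a (σ i)) (N 0, b 0) (M j, a (σ j)) Pq *
        recTensor h4 (fun _ _ => 1) (k+1)
          (Function.update (fun t : Fin (k+1) => (M (i.succAbove t), a (σ (i.succAbove t))))
            ⟨(j:ℕ)-1, by have := j.isLt; omega⟩ Pq)
          (fun t => (N t.succ, b t.succ))
    = (∑ i0 : Fin (k+2), (if a i0 = b 0 then (1:ℝ) else 0) *
        ((-1:ℝ)^((i0:ℕ)) * Dl (k+1) (fun t => a (i0.succAbove t)) (fun t => b t.succ)))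
      * ((-1:ℝ)^((k+1)*k/2)) *
        ((-1:ℝ)^((i:ℕ)) *
          ∑ P : ι, f4 (M i) (N 0) (M j) P *
            recTensor f4 (fun i p' => (-1 : ℝ)^(i+1+p')) (k+1)
              (Function.update (fun t : Fin (k+1) => M (i.succAbove t))
                ⟨(j:ℕ)-1, by have := j.isLt; omega⟩ P)
              (fun t => N t.succ)) := by
  have hij' : (i:ℕ) < (j:ℕ) := hij
  have hjlt := j.isLt
  have hjm : i.succAbove (⟨(j:ℕ)-1, by omega⟩ : Fin (k+1)) = j := by
    rw [Fin.succAbove_of_le_castSucc]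
    · apply Fin.ext; simp [Fin.val_succ]; omega
    · rw [Fin.le_def]; simp [Fin.coe_castSucc]; omega
  -- notation
  set jm : Fin (k+1) := ⟨(j:ℕ)-1, by omega⟩ with hjmdef
  set Mc : ι → Fin (k+1) → ι :=
    fun P => Function.update (fun t : Fin (k+1) => M (i.succAbove t)) jm P with hMc
  set Ψ : ι → (Fin (k+1) → A) → ℝ := fun P c =>
    recTensor h4 (fun _ _ => 1) (k+1) (fun t => (Mc P t, c t)) (fun t => (N t.succ, b t.succ))
    with hΨ
  -- step 1 : contract the e-sum
  have step1 : ∀ σ : Equiv.Perm (Fin (k+2)),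
      (∑ Pq : ι × A, h4 (M i, a (σ i)) (N 0, b 0) (M j, a (σ j)) Pq *
        recTensor h4 (fun _ _ => 1) (k+1)
          (Function.update (fun t : Fin (k+1) => (M (i.succAbove t), a (σ (i.succAbove t)))) jm Pq)
          (fun t => (N t.succ, b t.succ)))
      = ∑ P : ι,
          ((g (M i) (N 0) (M j) P
              - (if M i = N 0 then (1:ℝ) else 0) * (if M j = P then (1:ℝ) else 0)) *
            ((if a (σ i) = b 0 then (1:ℝ) else 0) * Ψ P (fun t => a (σ (i.succAbove t))))
          + ((if M i = N 0 then (1:ℝ) else 0) * (if M j = P then (1:ℝ) else 0)) *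
            ((if a (σ j) = b 0 then (1:ℝ) else 0) *
              Ψ P (fun t => a (σ (Function.update i.succAbove jm i t))))) := by
    intro σ
    rw [Fintype.sum_prod_type]
    apply Finset.sum_congr rfl
    intro P _
    -- componentwise update
    have hpair : ∀ e : A,
        Function.update (fun t : Fin (k+1) => (M (i.succAbove t), a (σ (i.succAbove t)))) jm (P, e)
        = fun t => (Mc P t, Function.update (fun t : Fin (k+1) => a (σ (i.succAbove t))) jm e t) := by
      intro e
      rw [pair_update]
    simp only [hpair, hh4]
    -- expand and contract over e
    have hexp : ∀ e : A,
        (g (M i) (N 0) (M j) P * (if a (σ i) = b 0 then (1:ℝ) else 0) * (if a (σ j) = e then (1:ℝ) else 0)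
          - (if M i = N 0 then (1:ℝ) else 0) * (if M j = P then (1:ℝ) else 0) *
              (if a (σ i) = b 0 then (1:ℝ) else 0) * (if a (σ j) = e then (1:ℝ) else 0)
          + (if M i = N 0 then (1:ℝ) else 0) * (if M j = P then (1:ℝ) else 0) *
              (if a (σ j) = b 0 then (1:ℝ) else 0) * (if a (σ i) = e then (1:ℝ) else 0)) *
          recTensor h4 (fun _ _ => 1) (k+1)
            (fun t => (Mc P t, Function.update (fun t : Fin (k+1) => a (σ (i.succAbove t))) jm e t))
            (fun t => (N t.succ, b t.succ))
        = ((g (M i) (N 0) (M j) P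
              - (if M i = N 0 then (1:ℝ) else 0) * (if M j = P then (1:ℝ) else 0)) *
            (if a (σ i) = b 0 then (1:ℝ) else 0)) *
            ((if a (σ j) = e then (1:ℝ) else 0) *
              recTensor h4 (fun _ _ => 1) (k+1)
                (fun t => (Mc P t, Function.update (fun t : Fin (k+1) => a (σ (i.succAbove t))) jm e t))
                (fun t => (N t.succ, b t.succ)))
          + ((if M i = N 0 then (1:ℝ) else 0) * (if M j = P then (1:ℝ) else 0) *
              (if a (σ j) = b 0 then (1:ℝ) else 0)) *
            ((if a (σ i) = e then (1:ℝ) else 0) *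
              recTensor h4 (fun _ _ => 1) (k+1)
                (fun t => (Mc P t, Function.update (fun t : Fin (k+1) => a (σ (i.succAbove t))) jm e t))
                (fun t => (N t.succ, b t.succ))) := by
      intro e; ring
    simp only [hexp]
    rw [Finset.sum_add_distrib, ← Finset.mul_sum, ← Finset.mul_sum]
    rw [sum_delta_mul (a (σ j)), sum_delta_mul (a (σ i))]
    have hupdeq : Function.update (fun t : Fin (k+1) => a (σ (i.succAbove t))) jm (a (σ j))
        = fun t => a (σ (i.succAbove t)) := by
      have : a (σ j) = a (σ (i.succAbove jm)) := by rw [hjm]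
      rw [this, Function.update_eq_self]
    have hupd2 : Function.update (fun t : Fin (k+1) => a (σ (i.succAbove t))) jm (a (σ i))
        = fun t => a (σ (Function.update i.succAbove jm i t)) := by
      funext t
      by_cases h : t = jm
      · subst h; simp
      · rw [Function.update_of_ne h, Function.update_of_ne h]
    rw [hupdeq, hupd2]
    rw [hΨ]
    ring
  simp only [step1]
  -- step 2 : swap the σ and P sums
  rw [show (∑ σ : Equiv.Perm (Fin (k+2)), ((Equiv.Perm.sign σ : ℤ) : ℝ) *
      ∑ P : ι,
          ((g (M i) (N 0) (M j) P
              - (if M i = N 0 then (1:ℝ) else 0) * (if M j = P then (1:ℝ) else 0)) *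
            ((if a (σ i) = b 0 then (1:ℝ) else 0) * Ψ P (fun t => a (σ (i.succAbove t))))
          + ((if M i = N 0 then (1:ℝ) else 0) * (if M j = P then (1:ℝ) else 0)) *
            ((if a (σ j) = b 0 then (1:ℝ) else 0) *
              Ψ P (fun t => a (σ (Function.update i.succAbove jm i t))))))
    = ∑ P : ι,
        ((g (M i) (N 0) (M j) P
            - (if M i = N 0 then (1:ℝ) else 0) * (if M j = P then (1:ℝ) else 0)) *
          (∑ σ : Equiv.Perm (Fin (k+2)), ((Equiv.Perm.sign σ : ℤ) : ℝ) *
            ((if a (σ i) = b 0 then (1:ℝ) else 0) * Ψ P (fun t => a (σ (i.succAbove t)))))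
        + ((if M i = N 0 then (1:ℝ) else 0) * (if M j = P then (1:ℝ) else 0)) *
          (∑ σ : Equiv.Perm (Fin (k+2)), ((Equiv.Perm.sign σ : ℤ) : ℝ) *
            ((if a (σ j) = b 0 then (1:ℝ) else 0) *
              Ψ P (fun t => a (σ (Function.update i.succAbove jm i t)))))) from by
    simp only [Finset.mul_sum]
    rw [Finset.sum_comm]
    apply Finset.sum_congr rfl
    intro P _
    rw [← Finset.sum_add_distrib]
    apply Finset.sum_congr rfl
    intro σ _
    ring]
  -- step 3 : resolutions of identity + induction hypothesis
  rw [hjmdef]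
  have hins1 := fun P : ι => delta_insert (k+1) i a (b 0) (Ψ P)
  have hins2 := fun P : ι => delta_insert' k i j hij a (b 0) (Ψ P)
  simp only [hins1, hins2]
  have leaf := fun (P : ι) (i0 : Fin (k+2)) =>
    ih (Mc P) (fun t => N t.succ) (fun t => a (i0.succAbove t)) (fun t => b t.succ)
  simp only [hΨ]
  simp only [leaf]
  -- step 4 : final algebra
  simp only [hMc]
  simp only [Finset.mul_sum, Finset.sum_mul]
  simp only [← Finset.sum_add_distrib]
  rw [Finset.sum_comm]
  conv_rhs => rw [Finset.sum_comm]
  apply Finset.sum_congr rfl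
  intro i0 _
  apply Finset.sum_congr rfl
  intro P _
  rw [hf4 (M i) (N 0) (M j) P]
  ring

lemma snoc_eq_comp_last {X : Type} (k : ℕ) (c : Fin (k+2) → X) :
    (Fin.snoc (fun t : Fin k => c ⟨(t:ℕ), by have := t.isLt; omega⟩)
        (c ⟨k, by omega⟩) : Fin (k+1) → X)
    = fun t => c ((Fin.last (k+1)).succAbove t) := by
  funext t
  induction t using Fin.lastCases with
  | last =>
    rw [Fin.snoc_last]
    congr 1
    rw [Fin.succAbove_last]
    apply Fin.ext
    simp
  | cast s =>
    rw [Fin.snoc_castSucc]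
    congr 1
    rw [Fin.succAbove_last]
    apply Fin.ext
    simp

lemma snoc_eq_comp_k {X : Type} (k : ℕ) (c : Fin (k+2) → X) :
    (Fin.snoc (fun t : Fin k => c ⟨(t:ℕ), by have := t.isLt; omega⟩)
        (c (Fin.last (k+1))) : Fin (k+1) → X)
    = fun t => c ((⟨k, by omega⟩ : Fin (k+2)).succAbove t) := by
  funext t
  induction t using Fin.lastCases with
  | last =>
    rw [Fin.snoc_last]
    congr 1
    rw [Fin.succAbove_of_le_castSucc]
    · apply Fin.ext; simp
    · rw [Fin.le_def]; simp
  | cast s =>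
    rw [Fin.snoc_castSucc]
    congr 1
    rw [Fin.succAbove_of_castSucc_lt]
    · apply Fin.ext; simp
    · rw [Fin.lt_def]; simp [Fin.coe_castSucc]

lemma Tlast {ι : Type} [Fintype ι] [DecidableEq ι] {A : Type} [Fintype A] [DecidableEq A]
    (g f4 : ι → ι → ι → ι → ℝ)
    (hf4 : ∀ M N P Q : ι, f4 M N P Q
      = g M N P Q - 2 * (if M = N then (1 : ℝ) else 0) * (if P = Q then (1 : ℝ) else 0))
    (h4 : (ι × A) → (ι × A) → (ι × A) → (ι × A) → ℝ)
    (hh4 : ∀ (M N P Q : ι) (a b c d : A), h4 (M, a) (N, b) (P, c) (Q, d)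
      = g M N P Q * (if a = b then (1 : ℝ) else 0) * (if c = d then (1 : ℝ) else 0)
        - (if M = N then (1 : ℝ) else 0) * (if P = Q then (1 : ℝ) else 0) *
            (if a = b then (1 : ℝ) else 0) * (if c = d then (1 : ℝ) else 0)
        + (if M = N then (1 : ℝ) else 0) * (if P = Q then (1 : ℝ) else 0) *
            (if c = b then (1 : ℝ) else 0) * (if a = d then (1 : ℝ) else 0))
    (k : ℕ)
    (ih : ∀ (M N : Fin (k+1) → ι) (a b : Fin (k+1) → A),
      ∑ σ : Equiv.Perm (Fin (k+1)), ((Equiv.Perm.sign σ : ℤ) : ℝ) *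
        recTensor h4 (fun _ _ => 1) (k+1) (fun t => (M t, a (σ t))) (fun t => (N t, b t))
      = (-1 : ℝ)^((k+1)*k/2) * Dl (k+1) a b *
          recTensor f4 (fun i p' => (-1 : ℝ)^(i+1+p')) (k+1) M N)
    (M N : Fin (k+2) → ι) (a b : Fin (k+2) → A) :
    ∑ σ : Equiv.Perm (Fin (k+2)), ((Equiv.Perm.sign σ : ℤ) : ℝ) *
      ∑ Pq : ι × A,
        h4 (M (Fin.last (k+1)), a (σ (Fin.last (k+1)))) (N 0, b 0)
            (M ⟨k, by omega⟩, a (σ ⟨k, by omega⟩)) Pq *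
          recTensor h4 (fun _ _ => 1) (k+1)
            (Fin.snoc (fun t : Fin k =>
              (M ⟨(t:ℕ), by have := t.isLt; omega⟩, a (σ ⟨(t:ℕ), by have := t.isLt; omega⟩))) Pq)
            (fun t => (N t.succ, b t.succ))
    = (∑ i0 : Fin (k+2), (if a i0 = b 0 then (1:ℝ) else 0) *
        ((-1:ℝ)^((i0:ℕ)) * Dl (k+1) (fun t => a (i0.succAbove t)) (fun t => b t.succ)))
      * ((-1:ℝ)^((k+1)*k/2)) *
        ((-1:ℝ)^(k+1) *
          ∑ P : ι, f4 (M (Fin.last (k+1))) (N 0) (M ⟨k, by omega⟩) P *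
            recTensor f4 (fun i p' => (-1 : ℝ)^(i+1+p')) (k+1)
              (Fin.snoc (fun t : Fin k => M ⟨(t:ℕ), by have := t.isLt; omega⟩) P)
              (fun t => N t.succ)) := by
  set Ms : ι → Fin (k+1) → ι :=
    fun P => Fin.snoc (fun t : Fin k => M ⟨(t:ℕ), by have := t.isLt; omega⟩) P with hMs
  set Ψ : ι → (Fin (k+1) → A) → ℝ := fun P c =>
    recTensor h4 (fun _ _ => 1) (k+1) (fun t => (Ms P t, c t)) (fun t => (N t.succ, b t.succ))
    with hΨ
  have step1 : ∀ σ : Equiv.Perm (Fin (k+2)),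
      (∑ Pq : ι × A,
        h4 (M (Fin.last (k+1)), a (σ (Fin.last (k+1)))) (N 0, b 0)
            (M ⟨k, by omega⟩, a (σ ⟨k, by omega⟩)) Pq *
          recTensor h4 (fun _ _ => 1) (k+1)
            (Fin.snoc (fun t : Fin k =>
              (M ⟨(t:ℕ), by have := t.isLt; omega⟩, a (σ ⟨(t:ℕ), by have := t.isLt; omega⟩))) Pq)
            (fun t => (N t.succ, b t.succ)))
      = ∑ P : ι,
          ((g (M (Fin.last (k+1))) (N 0) (M ⟨k, by omega⟩) P
              - (if M (Fin.last (k+1)) = N 0 then (1:ℝ) else 0) *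
                  (if M ⟨k, by omega⟩ = P then (1:ℝ) else 0)) *
            ((if a (σ (Fin.last (k+1))) = b 0 then (1:ℝ) else 0) *
              Ψ P (fun t => a (σ ((Fin.last (k+1)).succAbove t))))
          + ((if M (Fin.last (k+1)) = N 0 then (1:ℝ) else 0) *
                (if M ⟨k, by omega⟩ = P then (1:ℝ) else 0)) *
            ((if a (σ ⟨k, by omega⟩) = b 0 then (1:ℝ) else 0) *
              Ψ P (fun t => a (σ ((⟨k, by omega⟩ : Fin (k+2)).succAbove t))))) := by
    intro σ
    rw [Fintype.sum_prod_type]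
    apply Finset.sum_congr rfl
    intro P _
    have hpair : ∀ e : A,
        (Fin.snoc (fun t : Fin k =>
          (M ⟨(t:ℕ), by have := t.isLt; omega⟩, a (σ ⟨(t:ℕ), by have := t.isLt; omega⟩))) (P, e)
          : Fin (k+1) → ι × A)
        = fun t => (Ms P t,
            (Fin.snoc (fun t : Fin k => a (σ ⟨(t:ℕ), by have := t.isLt; omega⟩)) e
              : Fin (k+1) → A) t) := by
      intro e
      rw [pair_snoc]
    simp only [hpair, hh4]
    have hexp : ∀ e : A,
        (g (M (Fin.last (k+1))) (N 0) (M ⟨k, by omega⟩) P *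
            (if a (σ (Fin.last (k+1))) = b 0 then (1:ℝ) else 0) *
            (if a (σ ⟨k, by omega⟩) = e then (1:ℝ) else 0)
          - (if M (Fin.last (k+1)) = N 0 then (1:ℝ) else 0) *
              (if M ⟨k, by omega⟩ = P then (1:ℝ) else 0) *
              (if a (σ (Fin.last (k+1))) = b 0 then (1:ℝ) else 0) *
              (if a (σ ⟨k, by omega⟩) = e then (1:ℝ) else 0)
          + (if M (Fin.last (k+1)) = N 0 then (1:ℝ) else 0) *
              (if M ⟨k, by omega⟩ = P then (1:ℝ) else 0) *
              (if a (σ ⟨k, by omega⟩) = b 0 then (1:ℝ) else 0) *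
              (if a (σ (Fin.last (k+1))) = e then (1:ℝ) else 0)) *
          recTensor h4 (fun _ _ => 1) (k+1)
            (fun t => (Ms P t,
              (Fin.snoc (fun t : Fin k => a (σ ⟨(t:ℕ), by have := t.isLt; omega⟩)) e
                : Fin (k+1) → A) t))
            (fun t => (N t.succ, b t.succ))
        = ((g (M (Fin.last (k+1))) (N 0) (M ⟨k, by omega⟩) P
              - (if M (Fin.last (k+1)) = N 0 then (1:ℝ) else 0) *
                  (if M ⟨k, by omega⟩ = P then (1:ℝ) else 0)) *
            (if a (σ (Fin.last (k+1))) = b 0 then (1:ℝ) else 0)) *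
            ((if a (σ ⟨k, by omega⟩) = e then (1:ℝ) else 0) *
              recTensor h4 (fun _ _ => 1) (k+1)
                (fun t => (Ms P t,
                  (Fin.snoc (fun t : Fin k => a (σ ⟨(t:ℕ), by have := t.isLt; omega⟩)) e
                    : Fin (k+1) → A) t))
                (fun t => (N t.succ, b t.succ)))
          + ((if M (Fin.last (k+1)) = N 0 then (1:ℝ) else 0) *
                (if M ⟨k, by omega⟩ = P then (1:ℝ) else 0) *
                (if a (σ ⟨k, by omega⟩) = b 0 then (1:ℝ) else 0)) *
            ((if a (σ (Fin.last (k+1))) = e then (1:ℝ) else 0) *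
              recTensor h4 (fun _ _ => 1) (k+1)
                (fun t => (Ms P t,
                  (Fin.snoc (fun t : Fin k => a (σ ⟨(t:ℕ), by have := t.isLt; omega⟩)) e
                    : Fin (k+1) → A) t))
                (fun t => (N t.succ, b t.succ))) := by
      intro e; ring
    simp only [hexp]
    rw [Finset.sum_add_distrib, ← Finset.mul_sum, ← Finset.mul_sum]
    rw [sum_delta_mul (a (σ ⟨k, by omega⟩)), sum_delta_mul (a (σ (Fin.last (k+1))))]
    rw [snoc_eq_comp_last k (fun x => a (σ x)), snoc_eq_comp_k k (fun x => a (σ x))]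
    rw [hΨ]
    ring
  simp only [step1]
  rw [show (∑ σ : Equiv.Perm (Fin (k+2)), ((Equiv.Perm.sign σ : ℤ) : ℝ) *
      ∑ P : ι,
          ((g (M (Fin.last (k+1))) (N 0) (M ⟨k, by omega⟩) P
              - (if M (Fin.last (k+1)) = N 0 then (1:ℝ) else 0) *
                  (if M ⟨k, by omega⟩ = P then (1:ℝ) else 0)) *
            ((if a (σ (Fin.last (k+1))) = b 0 then (1:ℝ) else 0) *
              Ψ P (fun t => a (σ ((Fin.last (k+1)).succAbove t))))
          + ((if M (Fin.last (k+1)) = N 0 then (1:ℝ) else 0) *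
                (if M ⟨k, by omega⟩ = P then (1:ℝ) else 0)) *
            ((if a (σ ⟨k, by omega⟩) = b 0 then (1:ℝ) else 0) *
              Ψ P (fun t => a (σ ((⟨k, by omega⟩ : Fin (k+2)).succAbove t))))))
    = ∑ P : ι,
        ((g (M (Fin.last (k+1))) (N 0) (M ⟨k, by omega⟩) P
            - (if M (Fin.last (k+1)) = N 0 then (1:ℝ) else 0) *
                (if M ⟨k, by omega⟩ = P then (1:ℝ) else 0)) *
          (∑ σ : Equiv.Perm (Fin (k+2)), ((Equiv.Perm.sign σ : ℤ) : ℝ) *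
            ((if a (σ (Fin.last (k+1))) = b 0 then (1:ℝ) else 0) *
              Ψ P (fun t => a (σ ((Fin.last (k+1)).succAbove t)))))
        + ((if M (Fin.last (k+1)) = N 0 then (1:ℝ) else 0) *
              (if M ⟨k, by omega⟩ = P then (1:ℝ) else 0)) *
          (∑ σ : Equiv.Perm (Fin (k+2)), ((Equiv.Perm.sign σ : ℤ) : ℝ) *
            ((if a (σ ⟨k, by omega⟩) = b 0 then (1:ℝ) else 0) *
              Ψ P (fun t => a (σ ((⟨k, by omega⟩ : Fin (k+2)).succAbove t)))))) from by
    simp only [Finset.mul_sum]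
    rw [Finset.sum_comm]
    apply Finset.sum_congr rfl
    intro P _
    rw [← Finset.sum_add_distrib]
    apply Finset.sum_congr rfl
    intro σ _
    ring]
  have hins1 := fun P : ι => delta_insert (k+1) (Fin.last (k+1)) a (b 0) (Ψ P)
  have hins2 := fun P : ι => delta_insert (k+1) (⟨k, by omega⟩ : Fin (k+2)) a (b 0) (Ψ P)
  simp only [hins1, hins2]
  have leaf := fun (P : ι) (i0 : Fin (k+2)) =>
    ih (Ms P) (fun t => N t.succ) (fun t => a (i0.succAbove t)) (fun t => b t.succ)
  simp only [hΨ]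
  simp only [leaf]
  simp only [hMs, Fin.val_last]
  simp only [Finset.mul_sum, Finset.sum_mul]
  simp only [← Finset.sum_add_distrib]
  rw [Finset.sum_comm]
  conv_rhs => rw [Finset.sum_comm]
  apply Finset.sum_congr rfl
  intro i0 _
  apply Finset.sum_congr rfl
  intro P _
  rw [hf4 (M (Fin.last (k+1))) (N 0) (M ⟨k, by omega⟩) P]
  ring

lemma sum_perm_double {n : ℕ} {β : Type} [Fintype β] (w : β → ℝ) (F : β → Fin n → Fin n → ℝ) :
    ∑ σ : β, w σ * (∑ i : Fin n, ∑ j : Fin n, if i < j then F σ i j else 0)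
    = ∑ i : Fin n, ∑ j : Fin n, if i < j then (∑ σ : β, w σ * F σ i j) else 0 := by
  simp only [Finset.mul_sum]
  rw [Finset.sum_comm]
  apply Finset.sum_congr rfl
  intro i _
  rw [Finset.sum_comm]
  apply Finset.sum_congr rfl
  intro j _
  split_ifs with h
  · rfl
  · simp

lemma mul_double_ite {n : ℕ} (c : ℝ) (F : Fin n → Fin n → ℝ) :
    c * (∑ i : Fin n, ∑ j : Fin n, if i < j then F i j else 0)
    = ∑ i : Fin n, ∑ j : Fin n, if i < j then c * F i j else 0 := by
  simp only [Finset.mul_sum, mul_ite, mul_zero]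

theorem key {ι : Type} [Fintype ι] [DecidableEq ι] {A : Type} [Fintype A] [DecidableEq A]
    (g f4 : ι → ι → ι → ι → ℝ)
    (hf4 : ∀ M N P Q : ι, f4 M N P Q
      = g M N P Q - 2 * (if M = N then (1 : ℝ) else 0) * (if P = Q then (1 : ℝ) else 0))
    (h4 : (ι × A) → (ι × A) → (ι × A) → (ι × A) → ℝ)
    (hh4 : ∀ (M N P Q : ι) (a b c d : A), h4 (M, a) (N, b) (P, c) (Q, d)
      = g M N P Q * (if a = b then (1 : ℝ) else 0) * (if c = d then (1 : ℝ) else 0)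
        - (if M = N then (1 : ℝ) else 0) * (if P = Q then (1 : ℝ) else 0) *
            (if a = b then (1 : ℝ) else 0) * (if c = d then (1 : ℝ) else 0)
        + (if M = N then (1 : ℝ) else 0) * (if P = Q then (1 : ℝ) else 0) *
            (if c = b then (1 : ℝ) else 0) * (if a = d then (1 : ℝ) else 0)) :
    ∀ p : ℕ, 1 ≤ p → ∀ (M N : Fin p → ι) (a b : Fin p → A),
      ∑ σ : Equiv.Perm (Fin p), ((Equiv.Perm.sign σ : ℤ) : ℝ) *
        recTensor h4 (fun _ _ => 1) p (fun t => (M t, a (σ t))) (fun t => (N t, b t))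
      = (-1 : ℝ)^(p*(p-1)/2) * Dl p a b *
          recTensor f4 (fun i p' => (-1 : ℝ)^(i+1+p')) p M N := by
  intro p
  induction p with
  | zero => intro h; omega
  | succ q ihq =>
    intro _ M N a b
    match q, ihq with
    | 0, _ =>
      rw [Fintype.sum_subsingleton _ (1 : Equiv.Perm (Fin 1))]
      simp only [Dl]
      rw [Fintype.sum_subsingleton _ (1 : Equiv.Perm (Fin 1))]
      simp only [recTensor, Equiv.Perm.sign_one, Equiv.Perm.one_apply, Fin.prod_univ_one]
      norm_num
      by_cases h1 : M 0 = N 0 <;> by_cases h2 : a 0 = b 0 <;>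
        simp [h1, h2, Prod.ext_iff]
    | (k+1), ihq =>
      have ih : ∀ (M N : Fin (k+1) → ι) (a b : Fin (k+1) → A),
          ∑ σ : Equiv.Perm (Fin (k+1)), ((Equiv.Perm.sign σ : ℤ) : ℝ) *
            recTensor h4 (fun _ _ => 1) (k+1) (fun t => (M t, a (σ t))) (fun t => (N t, b t))
          = (-1 : ℝ)^((k+1)*k/2) * Dl (k+1) a b *
              recTensor f4 (fun i p' => (-1 : ℝ)^(i+1+p')) (k+1) M N := by
        intro M N a b
        have := ihq (by omega) M N a b
        simpa using this
      -- unfold the recursion on the h side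
      have hunfold : ∀ σ : Equiv.Perm (Fin (k+2)),
          recTensor h4 (fun _ _ => 1) (k+2) (fun t => (M t, a (σ t))) (fun t => (N t, b t))
          = (∑ i : Fin (k+2), ∑ j : Fin (k+2), if i < j then
              (∑ Pq : ι × A, h4 (M i, a (σ i)) (N 0, b 0) (M j, a (σ j)) Pq *
                recTensor h4 (fun _ _ => 1) (k+1)
                  (Function.update
                    (fun t : Fin (k+1) => (M (i.succAbove t), a (σ (i.succAbove t))))
                    ⟨(j:ℕ)-1, by have := j.isLt; omega⟩ Pq)
                  (fun t => (N t.succ, b t.succ))) else 0)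
            - ∑ Pq : ι × A,
                h4 (M (Fin.last (k+1)), a (σ (Fin.last (k+1)))) (N 0, b 0)
                    (M ⟨k, by omega⟩, a (σ ⟨k, by omega⟩)) Pq *
                  recTensor h4 (fun _ _ => 1) (k+1)
                    (Fin.snoc (fun t : Fin k =>
                      (M ⟨(t:ℕ), by have := t.isLt; omega⟩,
                        a (σ ⟨(t:ℕ), by have := t.isLt; omega⟩))) Pq)
                    (fun t => (N t.succ, b t.succ)) := by
        intro σ
        simp only [recTensor, one_mul]
        rfl
      have hunfoldF :
          recTensor f4 (fun i p' => (-1 : ℝ)^(i+1+p')) (k+2) M N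
          = (∑ i : Fin (k+2), ∑ j : Fin (k+2), if i < j then
              ((-1:ℝ)^((i:ℕ)+1+(k+2)) *
                ∑ P : ι, f4 (M i) (N 0) (M j) P *
                  recTensor f4 (fun i p' => (-1 : ℝ)^(i+1+p')) (k+1)
                    (Function.update (fun t : Fin (k+1) => M (i.succAbove t))
                      ⟨(j:ℕ)-1, by have := j.isLt; omega⟩ P)
                    (fun t => N t.succ)) else 0)
            - ∑ P : ι, f4 (M (Fin.last (k+1))) (N 0) (M ⟨k, by omega⟩) P *
                recTensor f4 (fun i p' => (-1 : ℝ)^(i+1+p')) (k+1)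
                  (Fin.snoc (fun t : Fin k => M ⟨(t:ℕ), by have := t.isLt; omega⟩) P)
                  (fun t => N t.succ) := by
        simp only [recTensor]
        rfl
      simp only [hunfold, mul_sub]
      rw [Finset.sum_sub_distrib]
      rw [sum_perm_double]
      have hTij : ∀ i j : Fin (k+2), i < j →
          (∑ σ : Equiv.Perm (Fin (k+2)), ((Equiv.Perm.sign σ : ℤ) : ℝ) *
            ∑ Pq : ι × A, h4 (M i, a (σ i)) (N 0, b 0) (M j, a (σ j)) Pq *
              recTensor h4 (fun _ _ => 1) (k+1)
                (Function.update
                  (fun t : Fin (k+1) => (M (i.succAbove t), a (σ (i.succAbove t))))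
                  ⟨(j:ℕ)-1, by have := j.isLt; omega⟩ Pq)
                (fun t => (N t.succ, b t.succ)))
          = (∑ i0 : Fin (k+2), (if a i0 = b 0 then (1:ℝ) else 0) *
              ((-1:ℝ)^((i0:ℕ)) * Dl (k+1) (fun t => a (i0.succAbove t)) (fun t => b t.succ)))
            * ((-1:ℝ)^((k+1)*k/2)) *
              ((-1:ℝ)^((i:ℕ)) *
                ∑ P : ι, f4 (M i) (N 0) (M j) P *
                  recTensor f4 (fun i p' => (-1 : ℝ)^(i+1+p')) (k+1)
                    (Function.update (fun t : Fin (k+1) => M (i.succAbove t))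
                      ⟨(j:ℕ)-1, by have := j.isLt; omega⟩ P)
                    (fun t => N t.succ)) :=
        fun i j hij => Tij g f4 hf4 h4 hh4 k ih M N a b i j hij
      have hTlast := Tlast g f4 hf4 h4 hh4 k ih M N a b
      rw [hTlast]
      have hDl : Dl (k+2) a b = ∑ i0 : Fin (k+2), (if a i0 = b 0 then (1:ℝ) else 0) *
          ((-1 : ℝ)^((i0:ℕ)) * Dl (k+1) (fun t => a (i0.succAbove t)) (fun t => b t.succ)) :=
        Dl_rec (k+1) a b
      rw [hDl, hunfoldF]
      have hS2 : (-1:ℝ)^((k+2)*((k+2)-1)/2) = (-1:ℝ)^((k+1)*k/2) * (-1:ℝ)^(k+1) := by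
        rw [← pow_add]
        congr 1
        obtain ⟨r, hr⟩ := Nat.even_mul_succ_self k
        have e1 : (k+2)*((k+2)-1) = k*(k+1) + 2*(k+1) := by
          have h21 : (k+2)-1 = k+1 := rfl
          rw [h21]; ring
        have e2 : (k+1)*k = k*(k+1) := Nat.mul_comm _ _
        rw [e1, e2, hr]
        omega
      rw [show ((k+2)*(k+2-1)/2) = ((k+2)*((k+2)-1)/2) from rfl, hS2]
      -- final algebra
      set W : ℝ := ∑ i0 : Fin (k+2), (if a i0 = b 0 then (1:ℝ) else 0) *
          ((-1 : ℝ)^((i0:ℕ)) * Dl (k+1) (fun t => a (i0.succAbove t)) (fun t => b t.succ)) with hW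
      set S1 : ℝ := (-1:ℝ)^((k+1)*k/2) with hS1
      rw [mul_sub (S1 * (-1:ℝ)^(k+1) * W)]
      have hpow : ∀ i0 : ℕ, (-1:ℝ)^(k+1) * (-1:ℝ)^(i0+1+(k+2)) = (-1:ℝ)^i0 := by
        intro i0
        rw [← pow_add]
        rw [show (k+1) + (i0+1+(k+2)) = i0 + 2*(k+2) by omega]
        rw [pow_add, pow_mul]
        norm_num
      congr 1
      · rw [mul_double_ite]
        apply Finset.sum_congr rfl
        intro i _
        apply Finset.sum_congr rfl
        intro j _
        split_ifs with h
        · rw [hTij i j h]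
          rw [← hpow ((i:ℕ))]
          ring
        · rfl
      · ring

end AuxStatement14

/-- With `f = g − 2δδ`, `h` the doubled-index tensor
`h_{(M,a)}{}^{(N,b)}{}_{(P,c)}{}^{(Q,d)} = g_M{}^N{}_P{}^Q δ^a_b δ^c_d
− δ_M^N δ_P^Q δ^a_b δ^c_d + δ_M^N δ_P^Q δ^c_b δ^a_d`, `f_p` the recursively defined
family with prefactor `(−1)^{i+p}` (paper indexing: Lean index `i` corresponds to the
paper index `i + 1`), and `h_p` the analogous family over the doubled index set with
prefactor `+1`, antisymmetrizing `h_p` over the `𝓐`-indices attached to `M1, …, Mp`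
gives `h_p^{[a1⋯ap]} = (−1)^{p(p−1)/2} δ^{[a1⋯ap]}_{b1⋯bp} f_p`. -/
theorem antisymmetrized_levelp_tensor
    {ι : Type} [Fintype ι] [DecidableEq ι]
    {A : Type} [Fintype A] [DecidableEq A]
    (g f4 : ι → ι → ι → ι → ℝ)
    (hf4 : ∀ M N P Q : ι, f4 M N P Q
      = g M N P Q - 2 * (if M = N then (1 : ℝ) else 0) * (if P = Q then (1 : ℝ) else 0))
    (h4 : (ι × A) → (ι × A) → (ι × A) → (ι × A) → ℝ)
    (hh4 : ∀ (M N P Q : ι) (a b c d : A), h4 (M, a) (N, b) (P, c) (Q, d)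
      = g M N P Q * (if a = b then (1 : ℝ) else 0) * (if c = d then (1 : ℝ) else 0)
        - (if M = N then (1 : ℝ) else 0) * (if P = Q then (1 : ℝ) else 0) *
            (if a = b then (1 : ℝ) else 0) * (if c = d then (1 : ℝ) else 0)
        + (if M = N then (1 : ℝ) else 0) * (if P = Q then (1 : ℝ) else 0) *
            (if c = b then (1 : ℝ) else 0) * (if a = d then (1 : ℝ) else 0)) :
    ∀ p : ℕ, 1 ≤ p → ∀ (M N : Fin p → ι) (a b : Fin p → A),
      (p.factorial : ℝ)⁻¹ *
          ∑ σ : Equiv.Perm (Fin p), ((Equiv.Perm.sign σ : ℤ) : ℝ) *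
            recTensor h4 (fun _ _ => 1) p
              (fun t => (M t, a (σ t))) (fun t => (N t, b t))
        = (-1 : ℝ) ^ (p * (p - 1) / 2) *
            ((p.factorial : ℝ)⁻¹ *
              ∑ σ : Equiv.Perm (Fin p), ((Equiv.Perm.sign σ : ℤ) : ℝ) *
                ∏ t : Fin p, (if a (σ t) = b t then (1 : ℝ) else 0)) *
            recTensor f4 (fun i p' => (-1 : ℝ) ^ (i + 1 + p')) p M N := by
  intro p hp M N a b
  rw [key g f4 hf4 h4 hh4 p hp M N a b]
  simp only [Dl]
  ring
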